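/- arXiv:2102.09822 — 2 statements merged into one kernel-verified Lean document; each statement's English description precedes it below -/
import Mathlib

section
/- Let Q₁,…,Q_N satisfy ∑ᵢ QᵢᵀQᵢ = I and π > 0. Then every eigenvalue τ of T_π := (1/N) ∑ᵢ (QᵢᵀQᵢ + πI)^{-1} satisfies τ ≤ (πN + N − 1)/(πN(1+π)). -/
open Matrix BigOperators

private lemma psd_smul {n : ℕ} {c : ℝ} (hc : 0 ≤ c) {M : Matrix (Fin n) (Fin n) ℝ}
    (hM : M.PosSemidef) : (c • M).PosSemidef := by
  refine Matrix.PosSemidef.of_dotProduct_mulVec_nonneg ?_ (fun x => ?_)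
  · unfold Matrix.IsHermitian
    rw [conjTranspose_smul, hM.1]
    simp
  · rw [smul_mulVec, dotProduct_smul]
    exact smul_nonneg hc (hM.dotProduct_mulVec_nonneg x)

private lemma sum_mulVec' {n : ℕ} {ι : Type*} (s : Finset ι)
    (B : ι → Matrix (Fin n) (Fin n) ℝ) (v : Fin n → ℝ) :
    (∑ i ∈ s, B i) *ᵥ v = ∑ i ∈ s, B i *ᵥ v := by
  induction s using Finset.cons_induction with
  | empty => simp [Matrix.zero_mulVec]
  | cons i s hi ih => simp [Finset.sum_cons, Matrix.add_mulVec, ih]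

private lemma dotProduct_sum' {n : ℕ} {ι : Type*} (s : Finset ι)
    (v : Fin n → ℝ) (f : ι → Fin n → ℝ) :
    v ⬝ᵥ (∑ i ∈ s, f i) = ∑ i ∈ s, v ⬝ᵥ f i := by
  induction s using Finset.cons_induction with
  | empty => simp
  | cons i s hi ih => simp [Finset.sum_cons, dotProduct_add, ih]

open scoped MatrixOrder in
private lemma key {n : ℕ} {A : Matrix (Fin n) (Fin n) ℝ} (hA : A.PosSemidef)
    (hIA : ((1 : Matrix (Fin n) (Fin n) ℝ) - A).PosSemidef) {p : ℝ} (hp : 0 < p) :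
    ((1/p) • (1 : Matrix (Fin n) (Fin n) ℝ) + (1/(1+p) - 1/p) • A
      - (A + p • (1 : Matrix (Fin n) (Fin n) ℝ))⁻¹).PosSemidef := by
  have hp' : p ≠ 0 := ne_of_gt hp
  have hp1 : (1:ℝ) + p ≠ 0 := by positivity
  have hpp : p * (1+p) ≠ 0 := by positivity
  have hpp2 : p + p^2 ≠ 0 := by positivity
  set M : Matrix (Fin n) (Fin n) ℝ := A + p • 1 with hMdef
  have hpI : (p • (1 : Matrix (Fin n) (Fin n) ℝ)).PosDef := by
    rw [smul_one_eq_diagonal]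
    exact Matrix.PosDef.diagonal (fun i => hp)
  have hM : M.PosDef := Matrix.PosDef.posSemidef_add hA hpI
  have hMdet : IsUnit M.det := isUnit_iff_ne_zero.mpr (ne_of_gt hM.det_pos)
  set S : Matrix (Fin n) (Fin n) ℝ := CFC.sqrt M with hSdef
  have hS : S * S = M := CFC.sqrt_mul_sqrt_self M hM.posSemidef.nonneg
  have hSH : S.IsHermitian := (Matrix.nonneg_iff_posSemidef.mp (CFC.sqrt_nonneg M)).1
  have hSdet : IsUnit S.det := by
    have : S.det * S.det = M.det := by rw [← det_mul, hS]
    apply isUnit_iff_ne_zero.mpr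
    intro h
    rw [h, mul_zero] at this
    exact (ne_of_gt hM.det_pos) this.symm
  have hSS : S * S⁻¹ = 1 := mul_nonsing_inv S hSdet
  have hSS' : S⁻¹ * S = 1 := nonsing_inv_mul S hSdet
  have hSM : S * M = M * S := by rw [← hS, mul_assoc]
  have hSA : S * A = A * S := by
    have h2 : S * A + p • S = A * S + p • S := by
      have := hSM
      rw [hMdef, mul_add, add_mul, mul_smul_comm, smul_mul_assoc, mul_one, one_mul] at this
      exact this
    exact add_right_cancel h2
  have hS1A : S * (1 - A) = (1 - A) * S := by
    rw [mul_sub, sub_mul, mul_one, one_mul, hSA]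
  -- D is PSD
  set D : Matrix (Fin n) (Fin n) ℝ := A * (1 - A) with hDdef
  have hR : (CFC.sqrt A) * (CFC.sqrt A) = A := CFC.sqrt_mul_sqrt_self A hA.nonneg
  have hRA : (CFC.sqrt A) * A = A * (CFC.sqrt A) := by
    have h := mul_assoc (CFC.sqrt A) (CFC.sqrt A) (CFC.sqrt A)
    rw [hR] at h
    exact h.symm
  have hR1A : (CFC.sqrt A) * (1 - A) = (1 - A) * (CFC.sqrt A) := by
    rw [mul_sub, sub_mul, mul_one, one_mul, hRA]
  have hRD : (CFC.sqrt A) * (1 - A) * (CFC.sqrt A)ᴴ = D := by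
    rw [show (CFC.sqrt A)ᴴ = (CFC.sqrt A) from (Matrix.nonneg_iff_posSemidef.mp (CFC.sqrt_nonneg A)).1]
    rw [mul_assoc, ← hR1A, ← mul_assoc, hR]
  have hD : D.PosSemidef := hRD ▸ hIA.mul_mul_conjTranspose_same (CFC.sqrt A)
  have hSD : S * D = D * S := by
    rw [hDdef, ← mul_assoc, hSA, mul_assoc, hS1A, ← mul_assoc, mul_assoc]
  have hS'D : S⁻¹ * D = D * S⁻¹ := by
    calc S⁻¹ * D = S⁻¹ * D * (S * S⁻¹) := by rw [hSS, mul_one]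
    _ = S⁻¹ * (D * S) * S⁻¹ := by simp only [mul_assoc]
    _ = S⁻¹ * (S * D) * S⁻¹ := by rw [hSD]
    _ = (S⁻¹ * S) * D * S⁻¹ := by simp only [mul_assoc]
    _ = D * S⁻¹ := by rw [hSS', one_mul]
  set c : ℝ := 1/(p*(1+p)) with hcdef
  have hc : 0 ≤ c := by positivity
  -- key algebraic identity
  have hid : ((1/p) • (1 : Matrix (Fin n) (Fin n) ℝ) + (1/(1+p) - 1/p) • A) * M
      = 1 + c • D := by
    rw [hMdef, hDdef]
    rw [add_mul, smul_mul_assoc, smul_mul_assoc, mul_add, mul_add, mul_sub,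
      mul_smul_comm, mul_smul_comm, mul_one, mul_one, one_mul]
    match_scalars <;> (try rw [hcdef]) <;> field_simp <;> try ring1
  have hMinv : M⁻¹ = S⁻¹ * S⁻¹ := by
    rw [← hS]
    exact Matrix.mul_inv_rev S S
  have hB : (1/p) • (1 : Matrix (Fin n) (Fin n) ℝ) + (1/(1+p) - 1/p) • A - M⁻¹
      = S⁻¹ * (c • D) * (S⁻¹)ᴴ := by
    have h1 : ((1/p) • (1 : Matrix (Fin n) (Fin n) ℝ) + (1/(1+p) - 1/p) • A)
        = (1 + c • D) * M⁻¹ := by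
      rw [← hid, mul_assoc, mul_nonsing_inv M hMdet, mul_one]
    have hS'H : (S⁻¹)ᴴ = S⁻¹ := by rw [conjTranspose_nonsing_inv, hSH.eq]
    have h2 : S⁻¹ * (c • D) * (S⁻¹)ᴴ = c • (D * (S⁻¹ * S⁻¹)) := by
      rw [hS'H, mul_smul_comm, smul_mul_assoc]
      congr 1
      rw [hS'D, mul_assoc]
    rw [h1, add_mul, one_mul, add_sub_cancel_left, hMinv, smul_mul_assoc, ← h2]
  rw [hB]
  exact (psd_smul hc hD).mul_mul_conjTranspose_same S⁻¹

theorem stmt5 {N n : ℕ} (hN : 2 ≤ N) {m : Fin N → ℕ}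
    (Q : ∀ i, Matrix (Fin (m i)) (Fin n) ℝ)
    (hQ : ∑ i, (Q i)ᵀ * Q i = 1)
    (p : ℝ) (hp : 0 < p)
    (T : Matrix (Fin n) (Fin n) ℝ)
    (hT : T = (N : ℝ)⁻¹ •
      ∑ i, ((Q i)ᵀ * Q i + p • (1 : Matrix (Fin n) (Fin n) ℝ))⁻¹) :
    ∀ (τ : ℝ) (t : Fin n → ℝ), t ≠ 0 → T *ᵥ t = τ • t →
      τ ≤ (p * N + N - 1) / (p * N * (1 + p)) := by
  intro τ t ht htv
  have hp' : p ≠ 0 := ne_of_gt hp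
  have hp1 : (1:ℝ) + p ≠ 0 := by positivity
  have hN0 : (0:ℝ) < N := by
    have : (2:ℝ) ≤ N := by exact_mod_cast hN
    linarith
  set A : Fin N → Matrix (Fin n) (Fin n) ℝ := fun i => (Q i)ᵀ * Q i with hAdef
  have hApsd : ∀ i, (A i).PosSemidef := by
    intro i
    have := Matrix.posSemidef_conjTranspose_mul_self (Q i)
    rwa [conjTranspose_eq_transpose_of_trivial] at this
  have hIA : ∀ i, ((1 : Matrix (Fin n) (Fin n) ℝ) - A i).PosSemidef := by
    intro i
    have h1 : (1 : Matrix (Fin n) (Fin n) ℝ) - A i = ∑ j ∈ Finset.univ.erase i, A j := by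
      rw [← hQ, ← Finset.add_sum_erase Finset.univ A (Finset.mem_univ i)]
      abel
    rw [h1]
    exact Finset.sum_induction A Matrix.PosSemidef (fun a b ha hb => ha.add hb)
      Matrix.PosSemidef.zero (fun j _ => hApsd j)
  -- quadratic form inequality per i
  have hkey : ∀ i, t ⬝ᵥ ((A i + p • 1)⁻¹ *ᵥ t)
      ≤ t ⬝ᵥ (((1/p) • (1 : Matrix (Fin n) (Fin n) ℝ) + (1/(1+p) - 1/p) • A i) *ᵥ t) := by
    intro i
    have hB := key (hApsd i) (hIA i) hp
    have h0 := hB.dotProduct_mulVec_nonneg t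
    simp only [star_trivial] at h0
    rw [sub_mulVec, dotProduct_sub] at h0
    linarith
  have htt : 0 < t ⬝ᵥ t := by
    have h0 : 0 ≤ t ⬝ᵥ t := by simpa using dotProduct_star_self_nonneg t
    rcases lt_or_eq_of_le h0 with h | h
    · exact h
    · exact absurd (dotProduct_self_eq_zero.mp h.symm) ht
  have hleft : t ⬝ᵥ (T *ᵥ t) = τ * (t ⬝ᵥ t) := by
    rw [htv, dotProduct_smul, smul_eq_mul]
  have hright : t ⬝ᵥ (T *ᵥ t) = (N:ℝ)⁻¹ * ∑ i, t ⬝ᵥ ((A i + p • 1)⁻¹ *ᵥ t) := by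
    rw [hT, smul_mulVec, dotProduct_smul, smul_eq_mul,
      sum_mulVec', dotProduct_sum']
  have hsum : ∑ i, t ⬝ᵥ ((A i + p • 1)⁻¹ *ᵥ t)
      ≤ (N * (1/p) + (1/(1+p) - 1/p)) * (t ⬝ᵥ t) := by
    calc ∑ i, t ⬝ᵥ ((A i + p • 1)⁻¹ *ᵥ t)
        ≤ ∑ i, t ⬝ᵥ (((1/p) • (1 : Matrix (Fin n) (Fin n) ℝ) + (1/(1+p) - 1/p) • A i) *ᵥ t) :=
          Finset.sum_le_sum (fun i _ => hkey i)
      _ = ∑ i : Fin N, ((1/p) * (t ⬝ᵥ t) + (1/(1+p) - 1/p) * (t ⬝ᵥ (A i *ᵥ t))) := by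
          apply Finset.sum_congr rfl
          intro i _
          rw [add_mulVec, dotProduct_add, smul_mulVec, smul_mulVec,
            one_mulVec, dotProduct_smul, dotProduct_smul, smul_eq_mul, smul_eq_mul]
      _ = N * ((1/p) * (t ⬝ᵥ t)) + (1/(1+p) - 1/p) * (t ⬝ᵥ ((∑ i, A i) *ᵥ t)) := by
          rw [Finset.sum_add_distrib, Finset.sum_const, Finset.card_univ, Fintype.card_fin,
            nsmul_eq_mul, ← Finset.mul_sum, sum_mulVec', dotProduct_sum']
      _ = (N * (1/p) + (1/(1+p) - 1/p)) * (t ⬝ᵥ t) := by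
          rw [show ∑ i, A i = 1 from hQ, one_mulVec]; ring
  have hτ : τ * (t ⬝ᵥ t) ≤ (N:ℝ)⁻¹ * ((N * (1/p) + (1/(1+p) - 1/p)) * (t ⬝ᵥ t)) := by
    rw [← hleft, hright]
    have := mul_le_mul_of_nonneg_left hsum (le_of_lt (inv_pos.mpr hN0))
    linarith
  have hbound : (N:ℝ)⁻¹ * (N * (1/p) + (1/(1+p) - 1/p)) = (p * N + N - 1) / (p * N * (1 + p)) := by
    field_simp
    ring
  have hfin : τ * (t ⬝ᵥ t) ≤ ((N:ℝ)⁻¹ * (N * (1/p) + (1/(1+p) - 1/p))) * (t ⬝ᵥ t) := by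
    rw [mul_assoc]; exact hτ
  have := (mul_le_mul_iff_of_pos_right htt).mp hfin
  linarith [hbound.le, hbound.ge]
end

section
/- Let Q₁,…,Q_N satisfy ∑ᵢ QᵢᵀQᵢ = I and π > 0. Suppose t is a unit vector with Q_j t = 0 for all j ≠ i₀ (for some fixed index i₀). Then Q_{i₀}ᵀQ_{i₀} t = t, and T_π t = ((πN + N − 1)/(πN(1+π)))·t; i.e., t is an eigenvector of T_π attaining the maximal eigenvalue bound. -/
open Matrix BigOperators

lemma sum_mulVec'_s9 {n N : ℕ} (A : Fin N → Matrix (Fin n) (Fin n) ℝ) (t : Fin n → ℝ) :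
    (∑ i, A i) *ᵥ t = ∑ i, A i *ᵥ t := by
  ext j
  simp only [mulVec, dotProduct, Matrix.sum_apply, Finset.sum_mul, Finset.sum_apply]
  exact Finset.sum_comm

lemma inv_eigen {n : ℕ} (A : Matrix (Fin n) (Fin n) ℝ) (hA : IsUnit A)
    (t : Fin n → ℝ) (c : ℝ) (hc : c ≠ 0) (h : A *ᵥ t = c • t) :
    A⁻¹ *ᵥ t = c⁻¹ • t := by
  have := hA.invertible
  have h1 : A⁻¹ *ᵥ (A *ᵥ t) = t := by
    rw [mulVec_mulVec, Matrix.inv_mul_of_invertible, one_mulVec]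
  rw [h, mulVec_smul] at h1
  calc A⁻¹ *ᵥ t = c⁻¹ • (c • (A⁻¹ *ᵥ t)) := by
        rw [smul_smul, inv_mul_cancel₀ hc, one_smul]
    _ = c⁻¹ • t := by rw [h1]

theorem stmt9 {N n : ℕ} {m : Fin N → ℕ}
    (Q : ∀ i, Matrix (Fin (m i)) (Fin n) ℝ)
    (hQ : ∑ i, (Q i)ᵀ * Q i = 1)
    (p : ℝ) (hp : 0 < p)
    (T : Matrix (Fin n) (Fin n) ℝ)
    (hT : T = (N : ℝ)⁻¹ •
      ∑ i, ((Q i)ᵀ * Q i + p • (1 : Matrix (Fin n) (Fin n) ℝ))⁻¹)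
    (t : Fin n → ℝ) (ht : ∑ j, t j ^ 2 = 1)
    (i₀ : Fin N) (h0 : ∀ j, j ≠ i₀ → Q j *ᵥ t = 0) :
    ((Q i₀)ᵀ * Q i₀) *ᵥ t = t ∧
      T *ᵥ t = ((p * N + N - 1) / (p * N * (1 + p))) • t := by
  have hN : 0 < (N : ℝ) := by exact_mod_cast i₀.pos
  -- each Q_j^T Q_j t = 0 for j ≠ i₀
  have hz : ∀ j, j ≠ i₀ → ((Q j)ᵀ * Q j) *ᵥ t = 0 := by
    intro j hj
    rw [← mulVec_mulVec, h0 j hj, mulVec_zero]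
  have h1 : ((Q i₀)ᵀ * Q i₀) *ᵥ t = t := by
    have := congrArg (· *ᵥ t) hQ
    simp only [one_mulVec] at this
    rw [sum_mulVec'_s9 , Finset.sum_eq_single i₀] at this
    · exact this
    · intro j _ hj; exact hz j hj
    · intro h; exact absurd (Finset.mem_univ i₀) h
  refine ⟨h1, ?_⟩
  -- positive definiteness of each summand
  have hpd : ∀ i, ((Q i)ᵀ * Q i + p • (1 : Matrix (Fin n) (Fin n) ℝ)).PosDef := by
    intro i
    refine Matrix.PosDef.posSemidef_add ?_ ?_
    · simpa using Matrix.posSemidef_conjTranspose_mul_self (Q i)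
    · rw [smul_one_eq_diagonal]
      exact Matrix.posDef_diagonal_iff.mpr fun _ => hp
  have hip : (1 + p) ≠ 0 := by positivity
  have hinv : ∀ i, (((Q i)ᵀ * Q i + p • (1 : Matrix (Fin n) (Fin n) ℝ))⁻¹) *ᵥ t =
      (if i = i₀ then (1 + p)⁻¹ else p⁻¹) • t := by
    intro i
    by_cases hi : i = i₀
    · subst hi
      simp only [if_pos rfl]
      refine inv_eigen _ (hpd i).isUnit t (1 + p) hip ?_
      rw [add_mulVec, h1, smul_mulVec, one_mulVec]
      ext j; simp [add_smul]; ring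
    · simp only [if_neg hi]
      refine inv_eigen _ (hpd i).isUnit t p hp.ne' ?_
      rw [add_mulVec, hz i hi, smul_mulVec, one_mulVec, zero_add]
  rw [hT, smul_mulVec, sum_mulVec'_s9]
  simp only [hinv]
  rw [← Finset.sum_smul, smul_smul]
  rw [Finset.sum_eq_add_sum_sdiff_singleton_of_mem (Finset.mem_univ i₀)]
  simp only [if_pos rfl, ↓reduceIte]
  rw [Finset.sum_ite_of_false (by intro i hi; simpa using (Finset.mem_sdiff.mp hi).2)]
  rw [Finset.sum_const, Finset.card_sdiff_of_subset (by simp), Finset.card_univ, Fintype.card_fin,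
    Finset.card_singleton, nsmul_eq_mul]
  have hN1 : (1:ℕ) ≤ N := i₀.pos
  have : ((N - 1 : ℕ) : ℝ) = (N : ℝ) - 1 := by
    push_cast [Nat.cast_sub hN1]; ring
  rw [this]
  congr 1
  field_simp
  ring
end
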